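/- Let A be an n×n real symmetric matrix (n ≥ 1) and u ∈ ℝⁿ a nonzero vector with uᵀAu ≠ 0. Let μ = (1/2)[uᵀu + uᵀA²u − √((uᵀu − uᵀA²u)² + 4(uᵀAu)²)] and α = [uᵀA²u − uᵀu + √((uᵀA²u − uᵀu)² + 4(uᵀAu)²)]/(2uᵀAu). Then ‖Au − αu‖² = μ(1 + α²), and there exists an eigenvalue λ of A such that |λ − α| ≤ √(μ(1 + α²))/‖u‖; equivalently, the chordal distance satisfies |λ − α|/(√(1 + λ²)·√(1 + α²)) ≤ √μ/(√(1 + λ²)·‖u‖). -/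

import Mathlib

open Matrix

lemma eigen_min_bound' {n : ℕ} (hn : 1 ≤ n) (A : Matrix (Fin n) (Fin n) ℝ) (hA : A.IsSymm)
    (u : Fin n → ℝ) (α : ℝ) :
    ∃ lam : ℝ, (∃ x : Fin n → ℝ, x ≠ 0 ∧ A.mulVec x = lam • x) ∧
      (lam - α)^2 * (u ⬝ᵥ u) ≤ (A.mulVec u - α • u) ⬝ᵥ (A.mulVec u - α • u) := by
  have hH : A.IsHermitian := by
    rw [Matrix.IsHermitian, Matrix.conjTranspose_eq_transpose_of_trivial]; exact hA
  set B := hH.eigenvectorBasis with hB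
  set lam := hH.eigenvalues with hlam
  have huniv : (Finset.univ : Finset (Fin n)).Nonempty := by
    simpa [Finset.univ_nonempty_iff] using Fin.pos_iff_nonempty.mp hn
  obtain ⟨i₀, -, hmin⟩ := Finset.exists_min_image Finset.univ (fun i => |lam i - α|) huniv
  refine ⟨lam i₀, ⟨⇑(B i₀), ?_, hH.mulVec_eigenvectorBasis i₀⟩, ?_⟩
  · intro h
    have h0 : B i₀ = 0 := by ext j; exact congrFun h j
    exact B.orthonormal.ne_zero i₀ h0
  set v : EuclideanSpace ℝ (Fin n) := WithLp.toLp 2 u with hv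
  set w : EuclideanSpace ℝ (Fin n) := WithLp.toLp 2 (A.mulVec u - α • u : Fin n → ℝ) with hw
  have hrepr : ∀ i, B.repr w i = (lam i - α) * B.repr v i := by
    intro i
    rw [B.repr_apply_apply, B.repr_apply_apply]
    have h1 : (inner ℝ (B i) w : ℝ) = ⇑(B i) ⬝ᵥ (A.mulVec u) - α * (⇑(B i) ⬝ᵥ u) := by
      simp [hw, PiLp.inner_apply, dotProduct, Finset.mul_sum, Finset.sum_sub_distrib,
        mul_comm, sub_mul, mul_assoc, mul_left_comm]
    have h2 : ⇑(B i) ⬝ᵥ (A.mulVec u) = lam i * (⇑(B i) ⬝ᵥ u) := by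
      rw [Matrix.dotProduct_mulVec, ← Matrix.mulVec_transpose, hA.eq,
        hH.mulVec_eigenvectorBasis, smul_dotProduct]
      rfl
    have h3 : (inner ℝ (B i) v : ℝ) = ⇑(B i) ⬝ᵥ u := by
      simp [hv, PiLp.inner_apply, dotProduct, mul_comm]
    rw [h1, h2, h3]; ring
  have hinner : ∀ (x : EuclideanSpace ℝ (Fin n)), (inner ℝ x x : ℝ) = ∑ i, (B.repr x i)^2 := by
    intro x
    calc (inner ℝ x x : ℝ) = inner ℝ (B.repr x) (B.repr x) := (B.repr.inner_map_map x x).symm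
      _ = ∑ i, (B.repr x i)^2 := by
          simp only [PiLp.inner_apply, RCLike.inner_apply, starRingEnd_apply, star_trivial, sq]
  have hwsum : (A.mulVec u - α • u) ⬝ᵥ (A.mulVec u - α • u) = ∑ i, (B.repr w i)^2 := by
    rw [← hinner w]
    simp only [PiLp.inner_apply, RCLike.inner_apply, starRingEnd_apply, star_trivial, dotProduct]
    rfl
  have husum : u ⬝ᵥ u = ∑ i, (B.repr v i)^2 := by
    rw [← hinner v]
    simp only [PiLp.inner_apply, RCLike.inner_apply, starRingEnd_apply, star_trivial, dotProduct]
    rfl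
  rw [hwsum, husum, Finset.mul_sum]
  apply Finset.sum_le_sum
  intro i _
  rw [hrepr i, mul_pow]
  apply mul_le_mul_of_nonneg_right _ (sq_nonneg _)
  have := hmin i (Finset.mem_univ i)
  calc (lam i₀ - α)^2 = |lam i₀ - α|^2 := (sq_abs _).symm
    _ ≤ |lam i - α|^2 := by gcongr
    _ = (lam i - α)^2 := sq_abs _

/-- With `μ` and the homogeneous Rayleigh quotient `α` as usual, one has
`‖Au − αu‖² = μ(1 + α²)`, and there exists an eigenvalue `λ` of `A` such that
`|λ − α| ≤ √(μ(1 + α²))/‖u‖`; equivalently, in the chordal metric,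
`|λ − α|/(√(1+λ²)√(1+α²)) ≤ √μ/(√(1+λ²)‖u‖)`. -/
theorem homogeneous_rq_chordal_bound
    {n : ℕ} (hn : 1 ≤ n) (A : Matrix (Fin n) (Fin n) ℝ) (hA : A.IsSymm)
    (u : Fin n → ℝ) (hu : u ≠ 0) (huAu : u ⬝ᵥ A.mulVec u ≠ 0)
    (μ : ℝ)
    (hμ : μ = (1/2) * (u ⬝ᵥ u + u ⬝ᵥ (A * A).mulVec u -
      Real.sqrt ((u ⬝ᵥ u - u ⬝ᵥ (A * A).mulVec u)^2 + 4 * (u ⬝ᵥ A.mulVec u)^2)))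
    (α : ℝ)
    (hα : α = (u ⬝ᵥ (A * A).mulVec u - u ⬝ᵥ u +
      Real.sqrt ((u ⬝ᵥ (A * A).mulVec u - u ⬝ᵥ u)^2 + 4 * (u ⬝ᵥ A.mulVec u)^2)) /
      (2 * (u ⬝ᵥ A.mulVec u))) :
    (A.mulVec u - α • u) ⬝ᵥ (A.mulVec u - α • u) = μ * (1 + α^2) ∧
    ∃ lam : ℝ, (∃ x : Fin n → ℝ, x ≠ 0 ∧ A.mulVec x = lam • x) ∧
      |lam - α| ≤ Real.sqrt (μ * (1 + α^2)) / Real.sqrt (u ⬝ᵥ u) ∧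
      |lam - α| / (Real.sqrt (1 + lam^2) * Real.sqrt (1 + α^2)) ≤
        Real.sqrt μ / (Real.sqrt (1 + lam^2) * Real.sqrt (u ⬝ᵥ u)) := by
  set a := u ⬝ᵥ u with ha
  set b := u ⬝ᵥ A.mulVec u with hb
  set c := u ⬝ᵥ (A * A).mulVec u with hc
  -- basic facts
  have hAuAu : (A.mulVec u) ⬝ᵥ (A.mulVec u) = c := by
    rw [hc, ← Matrix.mulVec_mulVec, Matrix.dotProduct_mulVec, ← Matrix.mulVec_transpose, hA.eq]
    exact dotProduct_comm _ _
  have hAuu : (A.mulVec u) ⬝ᵥ u = b := by rw [hb, dotProduct_comm]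
  have huAu' : u ⬝ᵥ (A.mulVec u) = b := rfl
  -- expand the quadratic form
  have hexpand : (A.mulVec u - α • u) ⬝ᵥ (A.mulVec u - α • u)
      = c - 2*α*b + α^2*a := by
    rw [sub_dotProduct, dotProduct_sub, dotProduct_sub,
      smul_dotProduct, smul_dotProduct, dotProduct_smul,
      dotProduct_smul, hAuAu, hAuu, huAu']
    simp only [smul_eq_mul, ha]
    ring
  -- part 1 algebra
  have part1 : (A.mulVec u - α • u) ⬝ᵥ (A.mulVec u - α • u) = μ * (1 + α^2) := by
    rw [hexpand]
    set s := Real.sqrt ((a - c)^2 + 4*b^2) with hsdef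
    have hs2 : s^2 = (a - c)^2 + 4*b^2 := Real.sq_sqrt (by positivity)
    have hα' : α = (c - a + s) / (2*b) := by
      rw [hα, hsdef]; ring_nf
    have hs1 : s = 2*b*α - c + a := by
      field_simp at hα'
      linarith
    have hP : b*α^2 - (c - a)*α - b = 0 := by
      have h4 : (2*b*α - c + a)^2 = (a-c)^2 + 4*b^2 := by rw [← hs1]; exact hs2
      have h0 : 4*b*(b*α^2 - (c-a)*α - b) = 0 := by nlinarith [h4]
      have hb4 : (4:ℝ)*b ≠ 0 := by positivity
      exact (mul_eq_zero.mp h0).resolve_left hb4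
    have hμ' : μ = c - b*α := by
      rw [hμ, hs1]; ring
    rw [hμ']
    linear_combination α * hP
  refine ⟨part1, ?_⟩
  -- positivity facts
  have hdot_nonneg : 0 ≤ (A.mulVec u - α • u) ⬝ᵥ (A.mulVec u - α • u) :=
    Finset.sum_nonneg fun i _ => mul_self_nonneg _
  have halpha_pos : (0:ℝ) < 1 + α^2 := by positivity
  have hμ0 : 0 ≤ μ := by
    have h := part1 ▸ hdot_nonneg
    nlinarith [sq_nonneg α]
  have hupos : 0 < a := by
    obtain ⟨i, hi⟩ := Function.ne_iff.mp hu
    exact Finset.sum_pos' (fun j _ => mul_self_nonneg _)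
      ⟨i, Finset.mem_univ i, mul_self_pos.mpr hi⟩
  obtain ⟨lam, hlam, hineq⟩ := eigen_min_bound' hn A hA u α
  rw [part1] at hineq
  refine ⟨lam, hlam, ?_⟩
  have hsqrtu : 0 < Real.sqrt a := Real.sqrt_pos.mpr hupos
  have key1 : |lam - α| ≤ Real.sqrt (μ * (1 + α^2)) / Real.sqrt a := by
    rw [le_div_iff₀ hsqrtu]
    have h1 : |lam - α| * Real.sqrt a = Real.sqrt ((lam - α)^2 * a) := by
      rw [Real.sqrt_mul (sq_nonneg _), Real.sqrt_sq_eq_abs]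
    rw [h1]
    exact Real.sqrt_le_sqrt hineq
  refine ⟨key1, ?_⟩
  have hsplit : Real.sqrt (μ * (1 + α^2)) = Real.sqrt μ * Real.sqrt (1 + α^2) :=
    Real.sqrt_mul hμ0 _
  have hsl : 0 < Real.sqrt (1 + lam^2) := Real.sqrt_pos.mpr (by positivity)
  have hsa : 0 < Real.sqrt (1 + α^2) := Real.sqrt_pos.mpr halpha_pos
  rw [div_le_div_iff₀ (by positivity) (by positivity)]
  rw [le_div_iff₀ hsqrtu, hsplit] at key1
  calc |lam - α| * (Real.sqrt (1 + lam^2) * Real.sqrt a)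
      = (|lam - α| * Real.sqrt a) * Real.sqrt (1 + lam^2) := by ring
    _ ≤ (Real.sqrt μ * Real.sqrt (1 + α^2)) * Real.sqrt (1 + lam^2) := by
        apply mul_le_mul_of_nonneg_right key1 (le_of_lt hsl)
    _ = Real.sqrt μ * (Real.sqrt (1 + lam^2) * Real.sqrt (1 + α^2)) := by ring
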